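/- If a complete Riemannian manifold M has positive fundamental tone λ*(M) > 0 then M is non-parabolic (hyperbolic); contrapositively, every parabolic manifold has λ*(M) = 0. In particular, a complete surface with finite total curvature (which is parabolic) has zero fundamental tone. -/
import Mathlib


open Real Set Filter MeasureTheory

/-- An abstract Dirichlet setting: a measure space together with a class of
test functions and a (nonnegative) Dirichlet energy functional, modelling
`u ↦ ∫_M |∇u|² dμ` on smooth compactly supported functions of a complete
Riemannian manifold. -/
structure DirichletSetting (X : Type*) [MeasurableSpace X] where
  μ : Measure X
  test : Set (X → ℝ)
  energy : (X → ℝ) → ℝ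
  energy_nonneg : ∀ u ∈ test, 0 ≤ energy u
  test_sq_integrable : ∀ u ∈ test, Integrable (fun x => u x ^ 2) μ
  test_nontrivial : ∃ u ∈ test, 0 < ∫ x, u x ^ 2 ∂μ

/-- The fundamental tone `λ*(M) = inf ∫|∇u|²/∫u²` over nonzero test
functions. -/
noncomputable def fundamentalTone {X : Type*} [MeasurableSpace X]
    (D : DirichletSetting X) : ℝ :=
  sInf {r : ℝ | ∃ u ∈ D.test, 0 < ∫ x, u x ^ 2 ∂D.μ ∧
    r = D.energy u / ∫ x, u x ^ 2 ∂D.μ}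

/-- Parabolicity, via the capacity characterization: there is a sequence of
test functions `0 ≤ uₙ ≤ 1` converging pointwise to `1` whose energies tend
to `0`. -/
def Parabolic {X : Type*} [MeasurableSpace X] (D : DirichletSetting X) : Prop :=
  ∃ u : ℕ → X → ℝ, (∀ n, u n ∈ D.test) ∧
    (∀ n x, 0 ≤ u n x ∧ u n x ≤ 1) ∧
    (∀ x, Tendsto (fun n => u n x) atTop (nhds 1)) ∧
    Tendsto (fun n => D.energy (u n)) atTop (nhds 0)

/-- A parabolic manifold has zero fundamental tone; equivalently, positive
fundamental tone implies non-parabolicity.  In particular, a complete surface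
with finite total curvature, being parabolic, has `λ*(M) = 0`. -/
theorem stmt_17 {X : Type*} [MeasurableSpace X] (D : DirichletSetting X)
    (hpar : Parabolic D) : fundamentalTone D = 0 := by
  obtain ⟨u, hu_test, hu_bd, hu_lim, hE⟩ := hpar
  obtain ⟨u₀, hu₀, hI₀⟩ := D.test_nontrivial
  set S : Set ℝ := {r : ℝ | ∃ u ∈ D.test, 0 < ∫ x, u x ^ 2 ∂D.μ ∧
    r = D.energy u / ∫ x, u x ^ 2 ∂D.μ} with hS
  have hSne : S.Nonempty := ⟨_, u₀, hu₀, hI₀, rfl⟩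
  have hSbdd : BddBelow S := by
    refine ⟨0, fun r hr => ?_⟩
    obtain ⟨v, hv, hvI, rfl⟩ := hr
    exact div_nonneg (D.energy_nonneg v hv) hvI.le
  have h0 : 0 ≤ sInf S := le_csInf hSne (fun r hr => by
    obtain ⟨v, hv, hvI, rfl⟩ := hr
    exact div_nonneg (D.energy_nonneg v hv) hvI.le)
  -- the truncated weight g
  set g : X → ℝ := fun x => min (u₀ x ^ 2) 1 with hg
  have hu₀i : Integrable (fun x => u₀ x ^ 2) D.μ := D.test_sq_integrable _ hu₀
  have hg_nonneg : ∀ x, 0 ≤ g x := fun x => le_min (sq_nonneg _) zero_le_one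
  have hg_le : ∀ x, g x ≤ 1 := fun x => min_le_right _ _
  have hg_meas : AEStronglyMeasurable g D.μ := by
    exact hu₀i.aestronglyMeasurable.inf aestronglyMeasurable_const
  have hgi : Integrable g D.μ := by
    refine hu₀i.mono' hg_meas ?_
    filter_upwards with x
    rw [Real.norm_eq_abs, abs_of_nonneg (hg_nonneg x)]
    exact min_le_left _ _
  have hc : 0 < ∫ x, g x ∂D.μ := by
    rw [integral_pos_iff_support_of_nonneg hg_nonneg hgi]
    have hsupp : Function.support g = Function.support (fun x => u₀ x ^ 2) := by
      ext x
      simp only [Function.mem_support, hg]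
      constructor
      · intro h h'
        exact h (by simp [h'])
      · intro h h'
        rcases lt_or_ge (u₀ x ^ 2) 1 with hx | hx
        · exact h (by rwa [min_eq_left hx.le] at h')
        · rw [min_eq_right hx] at h'; norm_num at h'
    rw [hsupp]
    exact (integral_pos_iff_support_of_nonneg (fun x => sq_nonneg _) hu₀i).mp hI₀
  set c : ℝ := ∫ x, g x ∂D.μ with hcdef
  -- dominated convergence: ∫ uₙ²·g → c
  have hfmeas : ∀ n, AEStronglyMeasurable (fun x => u n x ^ 2 * g x) D.μ :=
    fun n => (D.test_sq_integrable _ (hu_test n)).aestronglyMeasurable.mul hg_meas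
  have hfint : ∀ n, Integrable (fun x => u n x ^ 2 * g x) D.μ := by
    intro n
    refine hgi.mono' (hfmeas n) ?_
    filter_upwards with x
    have h1 : 0 ≤ u n x ^ 2 * g x := mul_nonneg (sq_nonneg _) (hg_nonneg x)
    rw [Real.norm_eq_abs, abs_of_nonneg h1]
    have : u n x ^ 2 ≤ 1 := by
      have := hu_bd n x
      nlinarith [this.1, this.2]
    nlinarith [hg_nonneg x]
  have htend : Tendsto (fun n => ∫ x, u n x ^ 2 * g x ∂D.μ) atTop (nhds c) := by
    have := tendsto_integral_of_dominated_convergence (F := fun n x => u n x ^ 2 * g x)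
      (f := g) (bound := g) hfmeas hgi ?_ ?_
    · exact this
    · intro n
      filter_upwards with x
      have h1 : 0 ≤ u n x ^ 2 * g x := mul_nonneg (sq_nonneg _) (hg_nonneg x)
      rw [Real.norm_eq_abs, abs_of_nonneg h1]
      have h2 : u n x ^ 2 ≤ 1 := by
        have := hu_bd n x
        nlinarith [this.1, this.2]
      nlinarith [hg_nonneg x]
    · filter_upwards with x
      have h1 : Tendsto (fun n => u n x ^ 2) atTop (nhds 1) := by
        have := (hu_lim x).pow 2
        simpa using this
      simpa using h1.mul_const (g x)
  -- eventually ∫ uₙ² ≥ c/2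
  have hbelow : ∀ᶠ n in atTop, c / 2 ≤ ∫ x, u n x ^ 2 ∂D.μ := by
    filter_upwards [htend.eventually (eventually_gt_nhds (show c / 2 < c by linarith))]
      with n hn
    refine le_trans hn.le ?_
    refine integral_mono (hfint n) (D.test_sq_integrable _ (hu_test n)) (fun x => ?_)
    have := hg_le x
    nlinarith [sq_nonneg (u n x), hg_nonneg x]
  -- conclude
  have key : ∀ ε > (0:ℝ), sInf S ≤ ε := by
    intro ε hε
    have hEsmall : ∀ᶠ n in atTop, D.energy (u n) < ε * (c / 2) := by
      have := hE.eventually (eventually_lt_nhds (show (0:ℝ) < ε * (c/2) by positivity))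
      exact this
    obtain ⟨n, hn1, hn2⟩ := (hbelow.and hEsmall).exists
    have hIpos : 0 < ∫ x, u n x ^ 2 ∂D.μ := lt_of_lt_of_le (by linarith) hn1
    have hmem : D.energy (u n) / ∫ x, u n x ^ 2 ∂D.μ ∈ S :=
      ⟨u n, hu_test n, hIpos, rfl⟩
    refine le_trans (csInf_le hSbdd hmem) ?_
    rw [div_le_iff₀ hIpos]
    have hEnn := D.energy_nonneg _ (hu_test n)
    nlinarith
  have : sInf S ≤ 0 := by
    by_contra h
    push_neg at h
    have := key (sInf S / 2) (by linarith)
    linarith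
  have heq : fundamentalTone D = sInf S := rfl
  rw [heq]
  linarith
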